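/- Let L be a first-order language with no function or constant symbols and finitely many relation symbols. Let K be a Fraïssé class of finite L-structures all of whose members are rigid, and let M be the Fraïssé limit of K. Then at least one of the following holds: (a) there exists a strict linear order < on the underlying set of M that is preserved by every L-automorphism of M; or (b) there exist structures A, B ∈ K with |A| = 2 such that for every C ∈ K there is a 2-coloring of the set of L-embeddings of A into C with the property that no L-embedding g : B → C is monochromatic, i.e. for every such g there exist L-embeddings f₁, f₂ : A → C whose ranges are contained in the range of g and which receive different colors. -/

import Mathlib

open FirstOrder FirstOrder.Language CategoryTheory

universe u v w w'

open Set Function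

section Stmt0Aux

variable {L : FirstOrder.Language.{u, v}} [L.IsRelational]

/-- The `L`-structure on `α` pulled back along a map `f : α → N`. -/
def pullStr {α : Type*} (N : Type*) [L.Structure N] (f : α → N) : L.Structure α where
  funMap := fun {_} F _ => isEmptyElim F
  RelMap := fun {_} r x => Structure.RelMap r (f ∘ x)

lemma strExt {α : Type*} {S T : L.Structure α}
    (h : ∀ (n : ℕ) (r : L.Relations n) (x : Fin n → α),
      S.RelMap r x ↔ T.RelMap r x) : S = T := by
  cases S with
  | mk fS rS =>
  cases T with
  | mk fT rT =>
  have hf : @fS = @fT := by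
    funext n F x
    exact isEmptyElim F
  have hr : @rS = @rT := by
    funext n r x
    exact propext (h n r x)
  cases hf; cases hr; rfl

/-- The canonical embedding from a pulled-back structure. -/
def pullEmb {α : Type*} {N : Type*} [L.Structure N] (f : α → N) (hf : Function.Injective f) :
    @Embedding L α N (pullStr N f) _ :=
  letI : L.Structure α := pullStr N f
  { toEmbedding := ⟨f, hf⟩
    map_fun' := fun {_} F _ => isEmptyElim F
    map_rel' := fun {_} _ _ => Iff.rfl }

@[simp] lemma pullEmb_apply {α : Type*} {N : Type*} [L.Structure N] (f : α → N)
    (hf : Function.Injective f) (x : α) : pullEmb (L := L) f hf x = f x := rfl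

def pairMap {N : Type*} (u v : N) : ULift.{w'} Bool → N := fun x => bif x.down then v else u

@[simp] lemma pairMap_false {N : Type*} (u v : N) :
    pairMap u v (ULift.up.{w'} false) = u := rfl

@[simp] lemma pairMap_true {N : Type*} (u v : N) :
    pairMap u v (ULift.up.{w'} true) = v := rfl

lemma pairMap_injective {N : Type*} {u v : N} (h : u ≠ v) :
    Function.Injective (pairMap u v : ULift.{w'} Bool → N) := by
  intro ⟨a⟩ ⟨b⟩ hab
  cases a <;> cases b <;> simp_all [pairMap]
  all_goals first
    | exact (h hab.symm).elim
    | exact (h hab).elim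
    | rfl

/-- The "type" of an ordered pair: the pulled-back structure on a two-element carrier. -/
def theta {N : Type*} [L.Structure N] (u v : N) : L.Structure (ULift.{w'} Bool) :=
  pullStr N (pairMap u v)

def swapV : ULift.{w'} Bool → ULift.{w'} Bool := fun x => ⟨!x.down⟩

lemma swapV_swapV (y : ULift.{w'} Bool) : swapV (swapV y) = y := by
  rcases y with ⟨b⟩; cases b <;> rfl

lemma pairMap_swapV {N : Type*} (u v : N) (y : ULift.{w'} Bool) :
    pairMap u v (swapV y) = pairMap v u y := by
  rcases y with ⟨b⟩; cases b <;> rfl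

/-- Reversal of a pair-type. -/
def swapStr (S : L.Structure (ULift.{w'} Bool)) : L.Structure (ULift.{w'} Bool) :=
  @pullStr L _ _ _ S swapV

lemma theta_swap {N : Type*} [L.Structure N] (u v : N) :
    (theta v u : L.Structure (ULift.{w'} Bool)) = swapStr (theta u v) := by
  apply strExt
  intro n r x
  show Structure.RelMap r (pairMap v u ∘ x) ↔ (theta (L := L) u v).RelMap r (swapV ∘ x)
  show _ ↔ Structure.RelMap r (pairMap u v ∘ (swapV ∘ x))
  have h1 : pairMap u v ∘ (swapV ∘ x) = pairMap v u ∘ x := by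
    funext i
    simp only [Function.comp_apply]
    exact pairMap_swapV u v (x i)
  rw [h1]

lemma swapStr_swapStr (S : L.Structure (ULift.{w'} Bool)) : swapStr (swapStr S) = S := by
  apply strExt
  intro n r x
  show S.RelMap r (swapV ∘ (swapV ∘ x)) ↔ S.RelMap r x
  have h1 : swapV ∘ (swapV ∘ x) = x := by
    funext i
    simp only [Function.comp_apply]
    exact swapV_swapV (x i)
  rw [h1]

lemma theta_emb {N N' : Type*} [L.Structure N] [L.Structure N'] (h : N ↪[L] N') (u v : N) :
    (theta (h u) (h v) : L.Structure (ULift.{w'} Bool)) = theta u v := by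
  apply strExt
  intro n r x
  have h1 : pairMap (h u) (h v) ∘ x = ⇑h ∘ (pairMap u v ∘ x) := by
    funext i
    simp only [Function.comp_apply]
    rcases x i with ⟨b⟩; cases b <;> rfl
  show Structure.RelMap r (pairMap (h u) (h v) ∘ x) ↔ Structure.RelMap r (pairMap u v ∘ x)
  rw [h1]
  exact h.map_rel' r _

lemma theta_pull {α : Type*} {N : Type*} [L.Structure N] (f : α → N) (a b : α) :
    @theta L _ α (pullStr N f) a b = (theta (f a) (f b) : L.Structure (ULift.{w'} Bool)) := by
  apply strExt
  intro n r x
  have h1 : f ∘ (pairMap a b ∘ x) = pairMap (f a) (f b) ∘ x := by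
    funext i
    simp only [Function.comp_apply]
    rcases x i with ⟨c⟩; cases c <;> rfl
  show Structure.RelMap r (f ∘ (pairMap a b ∘ x)) ↔ Structure.RelMap r (pairMap (f a) (f b) ∘ x)
  rw [h1]

/-- The canonical embedding of a pair type into the ambient structure, with the
structure given as an explicit parameter. -/
def pairEmbT {N : Type*} [L.Structure N] (t : L.Structure (ULift.{w'} Bool)) {u v : N}
    (huv : u ≠ v) (ht : theta u v = t) : @Embedding L (ULift.{w'} Bool) N t _ :=
  letI : L.Structure (ULift.{w'} Bool) := t
  { toEmbedding := ⟨pairMap u v, pairMap_injective huv⟩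
    map_fun' := fun {_} F _ => isEmptyElim F
    map_rel' := fun {_} r x => by subst ht; exact Iff.rfl }

@[simp] lemma pairEmbT_apply {N : Type*} [L.Structure N] (t : L.Structure (ULift.{w'} Bool))
    {u v : N} (huv : u ≠ v) (ht : theta u v = t) (x : ULift.{w'} Bool) :
    pairEmbT t huv ht x = pairMap u v x := rfl

lemma finite_strBool [Finite (Σ n, L.Relations n)] :
    Finite (L.Structure (ULift.{w'} Bool)) := by
  have hinj : Function.Injective
      (fun (S : L.Structure (ULift.{w'} Bool)) =>
        (fun (i : Σ n, L.Relations n) (x : Fin i.1 → ULift.{w'} Bool) => S.RelMap i.2 x)) := by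
    intro S T h
    apply strExt
    intro n r x
    exact iff_of_eq (congrFun (congrFun h ⟨n, r⟩) x)
  exact Finite.of_injective _ hinj

end Stmt0Aux

section Stmt0Aux2

variable {L : FirstOrder.Language.{u, v}} [L.IsRelational]

def tripMap {N : Type*} (x y z : N) : ULift.{w'} (Fin 3) → N :=
  fun i => if i.down = 0 then x else if i.down = 1 then y else z

@[simp] lemma tripMap_zero {N : Type*} (x y z : N) :
    tripMap x y z (ULift.up.{w'} 0) = x := by simp [tripMap]

@[simp] lemma tripMap_one {N : Type*} (x y z : N) :
    tripMap x y z (ULift.up.{w'} 1) = y := by simp [tripMap]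

@[simp] lemma tripMap_two {N : Type*} (x y z : N) :
    tripMap x y z (ULift.up.{w'} 2) = z := by simp [tripMap]

lemma tripMap_injective {N : Type*} {x y z : N} (hxy : x ≠ y) (hyz : y ≠ z) (hzx : z ≠ x) :
    Function.Injective (tripMap x y z : ULift.{w'} (Fin 3) → N) := by
  intro ⟨a⟩ ⟨b⟩ hab
  fin_cases a <;> fin_cases b <;> simp_all [tripMap] <;> first
    | rfl
    | exact (hxy hab).elim
    | exact (hyz hab).elim
    | exact (hzx hab).elim
    | exact (hxy hab.symm).elim
    | exact (hyz hab.symm).elim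
    | exact (hzx hab.symm).elim

/-- Any finite structure mapping into `M` by an embedding is in the age of `M`. -/
lemma mem_age_of_emb {M : Type w} [L.Structure M] (α : Type w) (S : L.Structure α) [Finite α]
    (f : @Embedding L α M S _) : (⟨α, S⟩ : Bundled L.Structure) ∈ L.age M := by
  refine ⟨?_, ⟨f⟩⟩
  exact Structure.fg_def.mpr Substructure.FG.of_finite

lemma jointList {K : Set (Bundled.{w} L.Structure)} (hK : IsFraisse K) :
    ∀ l : List (Bundled.{w} L.Structure), (∀ X ∈ l, X ∈ K) →
      ∃ B ∈ K, ∀ X ∈ l, Nonempty (X ↪[L] B) := by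
  intro l
  induction l with
  | nil =>
    intro _
    obtain ⟨B, hB⟩ := hK.is_nonempty
    exact ⟨B, hB, fun X hX => absurd hX List.not_mem_nil⟩
  | cons X l ih =>
    intro hmem
    obtain ⟨B', hB', h'⟩ := ih (fun Y hY => hmem Y (List.mem_cons_of_mem X hY))
    obtain ⟨B, hB, ⟨eX⟩, ⟨eB'⟩⟩ := hK.jointEmbedding X (hmem X List.mem_cons_self) B' hB'
    refine ⟨B, hB, ?_⟩
    intro Y hY
    rcases List.mem_cons.mp hY with rfl | hY
    · exact ⟨eX⟩
    · exact ⟨eB'.comp (h' Y hY).some⟩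

end Stmt0Aux2
section Stmt0Aux3

variable {L : FirstOrder.Language.{u, v}} [L.IsRelational]

def swapEquiv {N : Type*} [L.Structure N] (u v : N)
    (heq : (theta u v : L.Structure (ULift.{w'} Bool)) = theta v u) :
    @FirstOrder.Language.Equiv L (ULift.{w'} Bool) (ULift.{w'} Bool) (theta u v) (theta u v) :=
  letI : L.Structure (ULift.{w'} Bool) := theta (L := L) u v
  { toEquiv := ⟨swapV, swapV, swapV_swapV, swapV_swapV⟩
    map_fun' := fun {_} F _ => isEmptyElim F
    map_rel' := fun {n} r x => by
      have h1 : pairMap u v ∘ (swapV ∘ x) = pairMap v u ∘ x := by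
        funext i
        simp only [Function.comp_apply]
        exact pairMap_swapV u v (x i)
      have h2 := congrArg
        (fun S : L.Structure (ULift.{w'} Bool) => S.RelMap r x) heq
      show Structure.RelMap (M := N) r (pairMap u v ∘ (swapV ∘ x)) ↔
        Structure.RelMap (M := N) r (pairMap u v ∘ x)
      rw [h1]
      exact iff_of_eq h2.symm }

lemma rigid_swap {K : Set (Bundled.{w} L.Structure)}
    (hrigid : ∀ A ∈ K, ∀ e : A ≃[L] A, ∀ x : A, e x = x)
    {N : Type*} [L.Structure N] {u v : N} (huv : u ≠ v)
    (hmem : (⟨ULift.{w} Bool, theta u v⟩ : Bundled L.Structure) ∈ K) :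
    (theta u v : L.Structure (ULift.{w} Bool)) ≠ theta v u := by
  intro heq
  have h3 := hrigid _ hmem (swapEquiv u v heq) (ULift.up false)
  have h4 : swapEquiv (L := L) u v heq (ULift.up false) = ULift.up true := rfl
  rw [h4] at h3
  exact Bool.noConfusion (congrArg ULift.down h3)

lemma tower {K : Set (Bundled.{w} L.Structure)} (hK : IsFraisse K)
    (hb : ∀ A ∈ K, ∀ B' ∈ K, Nat.card A = 2 →
      ∃ C ∈ K, ∀ c : (A ↪[L] C) → Bool, ∃ g : B' ↪[L] C,
        ∀ f₁ f₂ : A ↪[L] C, Set.range ⇑f₁ ⊆ Set.range ⇑g → Set.range ⇑f₂ ⊆ Set.range ⇑g →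
          c f₁ = c f₂)
    (B : Bundled.{w} L.Structure) (hB : B ∈ K)
    (l : List (L.Structure (ULift.{w} Bool))) :
    ∃ C ∈ K, ∀ lo : C → C → Prop,
      (∀ a : C, ¬ lo a a) → (∀ a b c : C, lo a b → lo b c → lo a c) →
      (∀ a b : C, a ≠ b → lo a b ∨ lo b a) →
      ∃ (j : B ↪[L] C) (ε : L.Structure (ULift.{w} Bool) → Bool),
        ∀ t ∈ l, ∀ c₁ c₂ : C, c₁ ≠ c₂ → theta c₁ c₂ = t →
          c₁ ∈ Set.range ⇑j → c₂ ∈ Set.range ⇑j → (lo c₁ c₂ ↔ ε t = true) := by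
  classical
  induction l with
  | nil =>
    refine ⟨B, hB, ?_⟩
    intro lo _ _ _
    exact ⟨Embedding.refl L B, fun _ => false, fun t ht => absurd ht List.not_mem_nil⟩
  | cons t l ih =>
    obtain ⟨C', hC', hP'⟩ := ih
    by_cases hA : (⟨ULift.{w} Bool, t⟩ : Bundled L.Structure) ∈ K
    · have hcard : Nat.card (⟨ULift.{w} Bool, t⟩ : Bundled L.Structure) = 2 := by
        show Nat.card (ULift.{w} Bool) = 2
        rw [Nat.card_eq_fintype_card, Fintype.card_ulift, Fintype.card_bool]
      obtain ⟨C, hC, hram⟩ := hb ⟨ULift.{w} Bool, t⟩ hA C' hC' hcard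
      refine ⟨C, hC, ?_⟩
      intro lo hirr htr htot
      obtain ⟨g, hg⟩ := hram (fun f => decide (lo (f (ULift.up false)) (f (ULift.up true))))
      obtain ⟨j', ε', hP⟩ := hP' (fun a b => lo (g a) (g b))
        (fun a h => hirr _ h) (fun a b c h1 h2 => htr _ _ _ h1 h2)
        (fun a b hab => htot _ _ (fun h => hab (g.injective h)))
      have hrange : ∀ (s : L.Structure (ULift.{w} Bool)) (u v : C) (huv : u ≠ v)
          (ht : theta u v = s), u ∈ Set.range ⇑g → v ∈ Set.range ⇑g →
          Set.range ⇑(pairEmbT s huv ht) ⊆ Set.range ⇑g := by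
        intro s u v huv ht hu hv x hx
        obtain ⟨⟨b⟩, rfl⟩ := hx
        cases b
        · simpa using hu
        · simpa using hv
      by_cases hex : ∃ d₁ d₂ : C, d₁ ≠ d₂ ∧ theta d₁ d₂ = t ∧
          d₁ ∈ Set.range ⇑g ∧ d₂ ∈ Set.range ⇑g
      · obtain ⟨d₁, d₂, hd, hdt, hdm1, hdm2⟩ := hex
        refine ⟨g.comp j', fun s => if s = t then decide (lo d₁ d₂) else ε' s, ?_⟩
        intro s hs c₁ c₂ hne hθ h1 h2
        have h1' : c₁ ∈ Set.range ⇑g := by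
          obtain ⟨a, ha⟩ := h1; exact ⟨j' a, by simpa using ha⟩
        have h2' : c₂ ∈ Set.range ⇑g := by
          obtain ⟨a, ha⟩ := h2; exact ⟨j' a, by simpa using ha⟩
        by_cases hst : s = t
        · subst hst
          show lo c₁ c₂ ↔ (if s = s then decide (lo d₁ d₂) else ε' s) = true
          rw [if_pos rfl]
          have hcol := hg (pairEmbT s hne hθ) (pairEmbT s hd hdt)
            (hrange s c₁ c₂ hne hθ h1' h2') (hrange s d₁ d₂ hd hdt hdm1 hdm2)
          simp only [pairEmbT_apply, pairMap_false, pairMap_true] at hcol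
          simp only [decide_eq_true_eq]
          exact decide_eq_decide.mp hcol
        · show lo c₁ c₂ ↔ (if s = t then decide (lo d₁ d₂) else ε' s) = true
          rw [if_neg hst]
          have hsl : s ∈ l := (List.mem_cons.mp hs).resolve_left hst
          obtain ⟨a₁, ha₁⟩ := h1
          obtain ⟨a₂, ha₂⟩ := h2
          have hb₁ : g (j' a₁) = c₁ := by simpa using ha₁
          have hb₂ : g (j' a₂) = c₂ := by simpa using ha₂
          have hbne : j' a₁ ≠ j' a₂ := by
            intro h; apply hne; rw [← hb₁, ← hb₂, h]
          have hθ' : theta (j' a₁) (j' a₂) = s := by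
            have := theta_emb g (j' a₁) (j' a₂)
            rw [hb₁, hb₂] at this
            exact this.symm.trans hθ
          have hiff := hP s hsl (j' a₁) (j' a₂) hbne hθ' ⟨a₁, rfl⟩ ⟨a₂, rfl⟩
          rw [← hb₁, ← hb₂]
          exact hiff
      · refine ⟨g.comp j', fun s => if s = t then false else ε' s, ?_⟩
        intro s hs c₁ c₂ hne hθ h1 h2
        have h1' : c₁ ∈ Set.range ⇑g := by
          obtain ⟨a, ha⟩ := h1; exact ⟨j' a, by simpa using ha⟩
        have h2' : c₂ ∈ Set.range ⇑g := by
          obtain ⟨a, ha⟩ := h2; exact ⟨j' a, by simpa using ha⟩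
        by_cases hst : s = t
        · subst hst
          exact absurd ⟨c₁, c₂, hne, hθ, h1', h2'⟩ hex
        · show lo c₁ c₂ ↔ (if s = t then false else ε' s) = true
          rw [if_neg hst]
          have hsl : s ∈ l := (List.mem_cons.mp hs).resolve_left hst
          obtain ⟨a₁, ha₁⟩ := h1
          obtain ⟨a₂, ha₂⟩ := h2
          have hb₁ : g (j' a₁) = c₁ := by simpa using ha₁
          have hb₂ : g (j' a₂) = c₂ := by simpa using ha₂
          have hbne : j' a₁ ≠ j' a₂ := by
            intro h; apply hne; rw [← hb₁, ← hb₂, h]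
          have hθ' : theta (j' a₁) (j' a₂) = s := by
            have := theta_emb g (j' a₁) (j' a₂)
            rw [hb₁, hb₂] at this
            exact this.symm.trans hθ
          have hiff := hP s hsl (j' a₁) (j' a₂) hbne hθ' ⟨a₁, rfl⟩ ⟨a₂, rfl⟩
          rw [← hb₁, ← hb₂]
          exact hiff
    · refine ⟨C', hC', ?_⟩
      intro lo hirr htr htot
      obtain ⟨j', ε', hP⟩ := hP' lo hirr htr htot
      refine ⟨j', ε', ?_⟩
      intro s hs c₁ c₂ hne hθ h1 h2
      by_cases hst : s = t
      · subst hst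
        exact absurd (hK.hereditary C' hC' (mem_age_of_emb _ s (pairEmbT s hne hθ))) hA
      · exact hP s ((List.mem_cons.mp hs).resolve_left hst) c₁ c₂ hne hθ h1 h2

end Stmt0Aux3
/-- Let `L` be a finite relational language, `K` a Fraïssé class of finite
rigid `L`-structures, and `M` the Fraïssé limit of `K`.  Then either `M` carries a strict
linear order invariant under all of its automorphisms, or there are `A, B ∈ K` with `|A| = 2`
witnessing an explicit failure of the Ramsey property. -/
theorem stmt0 {L : FirstOrder.Language.{u, v}} [L.IsRelational]
    [Finite (Σ n, L.Relations n)]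
    (K : Set (Bundled.{w} L.Structure))
    (hK : IsFraisse K)
    (hfin : ∀ A ∈ K, Finite A)
    (hrigid : ∀ A ∈ K, ∀ e : A ≃[L] A, ∀ x : A, e x = x)
    (M : Type w) [L.Structure M] [Countable M]
    (hM : IsFraisseLimit K M) :
    (∃ lt : M → M → Prop, IsStrictTotalOrder M lt ∧
        ∀ (g : M ≃[L] M) (x y : M), lt x y → lt (g x) (g y)) ∨
    (∃ A ∈ K, ∃ B ∈ K, Nat.card A = 2 ∧
      ∀ C ∈ K, ∃ c : (A ↪[L] C) → Bool,
        ∀ g : B ↪[L] C, ∃ f₁ f₂ : A ↪[L] C,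
          Set.range ⇑f₁ ⊆ Set.range ⇑g ∧ Set.range ⇑f₂ ⊆ Set.range ⇑g ∧
          c f₁ ≠ c f₂) := by
  classical
  by_contra hcon
  rw [not_or] at hcon
  obtain ⟨ha0, hb0⟩ := hcon
  haveI hΘfin : Finite (L.Structure (ULift.{w} Bool)) := finite_strBool
  -- pairs of M are in K
  have hpairK : ∀ u v : M, u ≠ v →
      (⟨ULift.{w} Bool, theta u v⟩ : Bundled L.Structure) ∈ K := by
    intro u v huv
    have h := mem_age_of_emb (M := M) _ (theta (L := L) u v)
      (pullEmb (pairMap u v) (pairMap_injective huv))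
    rwa [hM.age] at h
  have hneq : ∀ u v : M, u ≠ v →
      (theta u v : L.Structure (ULift.{w} Bool)) ≠ theta v u :=
    fun u v huv => rigid_swap hrigid huv (hpairK u v huv)
  -- The negated Ramsey hypothesis in usable form
  have hb' : ∀ A ∈ K, ∀ B' ∈ K, Nat.card A = 2 →
      ∃ C ∈ K, ∀ c : (A ↪[L] C) → Bool, ∃ g : B' ↪[L] C,
        ∀ f₁ f₂ : A ↪[L] C, Set.range ⇑f₁ ⊆ Set.range ⇑g → Set.range ⇑f₂ ⊆ Set.range ⇑g →
          c f₁ = c f₂ := by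
    intro A hA B' hB' hcard
    by_contra hno
    push_neg at hno
    exact hb0 ⟨A, hA, B', hB', hcard, hno⟩
  -- From the failure of (a): every orientation has a cyclic triangle
  have lemA : ∀ σ : L.Structure (ULift.{w} Bool) → Bool,
      (∀ u v : M, u ≠ v → σ (theta v u) = !σ (theta u v)) →
      ∃ x y z : M, x ≠ y ∧ y ≠ z ∧ z ≠ x ∧
        σ (theta x y) = true ∧ σ (theta y z) = true ∧ σ (theta z x) = true := by
    intro σ hσ
    by_contra hnc
    push_neg at hnc
    set lt : M → M → Prop := fun x y => x ≠ y ∧ σ (theta x y) = true with hlt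
    have hsto : IsStrictTotalOrder M lt := by
      refine { trichotomous := ?_, irrefl := ?_, trans := ?_ }
      · intro x y
        by_cases hxy : x = y
        · exact fun _ _ => hxy
        · cases hbool : σ (theta x y) with
          | true => exact fun h _ => (h ⟨hxy, hbool⟩).elim
          | false =>
            refine fun _ h => (h ⟨Ne.symm hxy, ?_⟩).elim
            rw [hσ x y hxy, hbool]
            rfl
      · intro x h
        exact h.1 rfl
      · intro a b c hab hbc
        have hac : a ≠ c := by
          intro h
          subst h
          have h2 := hbc.2
          rw [hσ a b hab.1, hab.2] at h2
          exact Bool.noConfusion h2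
        refine ⟨hac, ?_⟩
        by_cases h : σ (theta a c) = true
        · exact h
        · exfalso
          have hca : σ (theta c a) = true := by
            rw [hσ a c hac]
            rw [Bool.not_eq_true] at h
            rw [h]
            rfl
          exact hnc a b c hab.1 hbc.1 (Ne.symm hac) hab.2 hbc.2 hca
    refine ha0 ⟨lt, hsto, ?_⟩
    intro g x y hxy
    refine ⟨fun h => hxy.1 (g.toEquiv.injective h), ?_⟩
    have hth : (theta (g x) (g y) : L.Structure (ULift.{w} Bool)) = theta x y := by
      have h := theta_emb g.toEmbedding x y
      simpa using h
    rw [hth]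
    exact hxy.2
  choose X Y Z hd1 hd2 hd3 hc1 hc2 hc3 using lemA
  obtain ⟨B₀, hB₀⟩ := hK.is_nonempty
  let Dfun : (L.Structure (ULift.{w} Bool) → Bool) → Bundled.{w} L.Structure := fun σ =>
    if h : (∀ u v : M, u ≠ v → σ (theta v u) = !σ (theta u v)) then
      ⟨ULift.{w} (Fin 3), pullStr M (tripMap (X σ h) (Y σ h) (Z σ h))⟩
    else B₀
  have hDK : ∀ σ, Dfun σ ∈ K := by
    intro σ
    by_cases h : (∀ u v : M, u ≠ v → σ (theta v u) = !σ (theta u v))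
    · have hval : Dfun σ =
          (⟨ULift.{w} (Fin 3), pullStr M (tripMap (X σ h) (Y σ h) (Z σ h))⟩ :
            Bundled L.Structure) := dif_pos h
      rw [hval]
      have hm := mem_age_of_emb (M := M) _ (pullStr (L := L) M (tripMap (X σ h) (Y σ h) (Z σ h)))
        (pullEmb _ (tripMap_injective (hd1 σ h) (hd2 σ h) (hd3 σ h)))
      rwa [hM.age] at hm
    · have hval : Dfun σ = B₀ := dif_neg h
      rw [hval]
      exact hB₀
  haveI : Fintype (L.Structure (ULift.{w} Bool)) := Fintype.ofFinite _
  haveI : Fintype (L.Structure (ULift.{w} Bool) → Bool) := Fintype.ofFinite _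
  obtain ⟨B, hBK, hBemb⟩ := jointList hK ((Finset.univ.toList).map Dfun) (by
    intro X hX
    obtain ⟨σ, _, rfl⟩ := List.mem_map.mp hX
    exact hDK σ)
  obtain ⟨C, hCK, hCprop⟩ := tower hK hb' B hBK (Finset.univ.toList)
  haveI : Finite C := hfin C hCK
  haveI : Countable C := Finite.to_countable
  obtain ⟨ι, hι⟩ := Countable.exists_injective_nat C
  obtain ⟨j, ε, hjε⟩ := hCprop (fun a b => ι a < ι b)
    (fun a h => lt_irrefl _ h) (fun a b c h1 h2 => lt_trans h1 h2)
    (fun a b hab => lt_or_gt_of_ne (fun h => hab (hι h)))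
  have hmemlist : ∀ t : L.Structure (ULift.{w} Bool), t ∈ (Finset.univ.toList :
      List (L.Structure (ULift.{w} Bool))) :=
    fun t => Finset.mem_toList.mpr (Finset.mem_univ t)
  obtain ⟨ι', hι'⟩ := Countable.exists_injective_nat (L.Structure (ULift.{w} Bool))
  set δ : L.Structure (ULift.{w} Bool) → Bool :=
    fun s => decide (ι' s ≤ ι' (swapStr s)) with hδdef
  have hδ : ∀ s : L.Structure (ULift.{w} Bool), swapStr s ≠ s → δ (swapStr s) = !δ s := by
    intro s hne
    have hab : ι' (swapStr s) ≠ ι' s := fun h => hne (hι' h)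
    show decide (ι' (swapStr s) ≤ ι' (swapStr (swapStr s))) = !decide (ι' s ≤ ι' (swapStr s))
    rw [swapStr_swapStr]
    by_cases hle : ι' s ≤ ι' (swapStr s)
    · have hgt : ¬ (ι' (swapStr s) ≤ ι' s) := by omega
      simp [hle, hgt]
    · have hge : ι' (swapStr s) ≤ ι' s := by omega
      simp [hle, hge]
  set R : L.Structure (ULift.{w} Bool) → Prop := fun s => ∃ d₁ d₂ : C, d₁ ≠ d₂ ∧
    theta d₁ d₂ = s ∧ d₁ ∈ Set.range ⇑j ∧ d₂ ∈ Set.range ⇑j with hRdef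
  set σs : L.Structure (ULift.{w} Bool) → Bool :=
    fun s => if R s then ε s else δ s with hσsdef
  have hRswap : ∀ s, R s → R (swapStr s) := by
    intro s hRs
    obtain ⟨d₁, d₂, hd, hθ, hm1, hm2⟩ := hRs
    refine ⟨d₂, d₁, hd.symm, ?_, hm2, hm1⟩
    rw [theta_swap d₁ d₂, hθ]
  -- pairs of C are in K
  have hpairKC : ∀ d₁ d₂ : C, d₁ ≠ d₂ →
      (⟨ULift.{w} Bool, theta d₁ d₂⟩ : Bundled L.Structure) ∈ K := by
    intro d₁ d₂ hd
    exact hK.hereditary C hCK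
      (mem_age_of_emb _ _ (pullEmb (pairMap d₁ d₂) (pairMap_injective hd)))
  -- σs satisfies the orientation-consistency condition
  have hcondσ : ∀ u v : M, u ≠ v → σs (theta v u) = !σs (theta u v) := by
    intro u v huv
    have hsw : (theta v u : L.Structure (ULift.{w} Bool)) = swapStr (theta u v) :=
      theta_swap u v
    by_cases hR : R (theta u v)
    · have hR' : R (theta v u) := by rw [hsw]; exact hRswap _ hR
      show (if R (theta (L := L) v u) then ε _ else δ _) =
        !(if R (theta (L := L) u v) then ε _ else δ _)
      rw [if_pos hR', if_pos hR]
      obtain ⟨d₁, d₂, hd, hθ, hm1, hm2⟩ := hR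
      have i1 : ι d₁ < ι d₂ ↔ ε (theta u v) = true :=
        hjε (theta u v) (hmemlist _) d₁ d₂ hd hθ hm1 hm2
      have hθ' : (theta d₂ d₁ : L.Structure (ULift.{w} Bool)) = theta v u := by
        rw [theta_swap d₁ d₂, hθ, ← hsw]
      have i2 : ι d₂ < ι d₁ ↔ ε (theta v u) = true :=
        hjε (theta v u) (hmemlist _) d₂ d₁ hd.symm hθ' hm2 hm1
      have hdne : ι d₁ ≠ ι d₂ := fun h => hd (hι h)
      cases hε : ε (theta u v) with
      | false =>
        have hnlt : ¬ (ι d₁ < ι d₂) := fun h => by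
          have := i1.mp h; rw [hε] at this; exact Bool.noConfusion this
        have hlt : ι d₂ < ι d₁ := by omega
        rw [i2.mp hlt]
        rfl
      | true =>
        have hlt : ι d₁ < ι d₂ := i1.mpr hε
        have hnlt : ¬ (ι d₂ < ι d₁) := by omega
        cases hε2 : ε (theta v u) with
        | false => rfl
        | true => exact absurd (i2.mpr hε2) hnlt
    · have hR' : ¬ R (theta v u) := by
        intro h
        apply hR
        have := hRswap _ h
        rwa [hsw, swapStr_swapStr] at this
      show (if R (theta (L := L) v u) then ε _ else δ _) =
        !(if R (theta (L := L) u v) then ε _ else δ _)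
      rw [if_neg hR', if_neg hR, hsw]
      apply hδ
      rw [← hsw]
      exact fun hh => (hneq u v huv) hh.symm
  -- the cyclic triangle for σs
  set x := X σs hcondσ with hxdef
  set y := Y σs hcondσ with hydef
  set z := Z σs hcondσ with hzdef
  have hDval : Dfun σs =
      (⟨ULift.{w} (Fin 3), pullStr M (tripMap x y z)⟩ : Bundled L.Structure) := dif_pos hcondσ
  have hBe := hBemb (Dfun σs) (List.mem_map.mpr ⟨σs, Finset.mem_toList.mpr (Finset.mem_univ _), rfl⟩)
  rw [hDval] at hBe
  obtain ⟨e0⟩ := hBe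
  letI : L.Structure (ULift.{w} (Fin 3)) := pullStr (L := L) M (tripMap x y z)
  let e3 : (ULift.{w} (Fin 3)) ↪[L] B := e0
  let m : (ULift.{w} (Fin 3)) ↪[L] C := j.comp e3
  have hm_eq : ∀ a : ULift.{w} (Fin 3), m a = j (e3 a) :=
    fun a => FirstOrder.Language.Embedding.comp_apply j e3 a
  have hm_mem : ∀ a : ULift.{w} (Fin 3), m a ∈ Set.range ⇑j := fun a => ⟨e3 a, (hm_eq a).symm⟩
  have hup : ∀ a b : Fin 3, a ≠ b → (ULift.up.{w} a) ≠ (ULift.up.{w} b) :=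
    fun a b hab h => hab (congrArg ULift.down h)
  have hmne : ∀ a b : ULift.{w} (Fin 3), a ≠ b → m a ≠ m b :=
    fun a b hab h => hab (m.injective h)
  have hth : ∀ (a b : ULift.{w} (Fin 3)),
      (theta (m a) (m b) : L.Structure (ULift.{w} Bool)) =
        theta (tripMap x y z a) (tripMap x y z b) := by
    intro a b
    rw [theta_emb m a b]
    exact theta_pull (tripMap x y z) a b
  have hθ12 : (theta (m (ULift.up 0)) (m (ULift.up 1)) : L.Structure (ULift.{w} Bool)) =
      theta x y := by rw [hth]; rw [tripMap_zero, tripMap_one]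
  have hθ23 : (theta (m (ULift.up 1)) (m (ULift.up 2)) : L.Structure (ULift.{w} Bool)) =
      theta y z := by rw [hth]; rw [tripMap_one, tripMap_two]
  have hθ31 : (theta (m (ULift.up 2)) (m (ULift.up 0)) : L.Structure (ULift.{w} Bool)) =
      theta z x := by rw [hth]; rw [tripMap_two, tripMap_zero]
  -- each of the three pair types is realized inside the range of j
  have hgetlo : ∀ (a b : ULift.{w} (Fin 3)) (u' v' : M), m a ≠ m b →
      (theta (m a) (m b) : L.Structure (ULift.{w} Bool)) = theta u' v' →
      σs (theta u' v') = true → ι (m a) < ι (m b) := by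
    intro a b u' v' hne hθab hσtrue
    have hRxy : R (theta (L := L) u' v') := ⟨m a, m b, hne, hθab, hm_mem a, hm_mem b⟩
    have hε : ε (theta (L := L) u' v') = true := by
      have h := hσtrue
      rw [show σs (theta (L := L) u' v') = if R (theta (L := L) u' v') then
        ε (theta (L := L) u' v') else δ (theta (L := L) u' v') from rfl, if_pos hRxy] at h
      exact h
    have hgoal := (hjε (theta u' v') (hmemlist _) (m a) (m b) hne hθab
      (hm_mem a) (hm_mem b)).mpr hε
    exact hgoal
  have l12 : ι (m (ULift.up 0)) < ι (m (ULift.up 1)) :=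
    hgetlo _ _ x y (hmne _ _ (hup 0 1 (by decide))) hθ12 (hc1 σs hcondσ)
  have l23 : ι (m (ULift.up 1)) < ι (m (ULift.up 2)) :=
    hgetlo _ _ y z (hmne _ _ (hup 1 2 (by decide))) hθ23 (hc2 σs hcondσ)
  have l31 : ι (m (ULift.up 2)) < ι (m (ULift.up 0)) :=
    hgetlo _ _ z x (hmne _ _ (hup 2 0 (by decide))) hθ31 (hc3 σs hcondσ)
  omega
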